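/- Let r ≥ 2 be an integer, p ∈ ℝ, q ≥ 0, and define f(t) = (r-1)(1+t)^p / ((1+qt)^2 (1+t)^2) · (q^2(r-2) t^3 + b t^2 + c t + d) for t ≥ 0, where b = q((2-r)p^2 + 2(r-3)p + 2(r-2)q + r), c = (2-r)p^2 + 2(r-1)pq + (r-2)q^2 + 2(r-2)p + 2rq, and d = r(2p+q). Then f is constant on [0,∞) if and only if (p,q) = (0,0) or (p,q) = (2,0). -/

import Mathlib

/-- Fiber scalar curvature of the generalized Cheeger–Gromoll metric `h_{p,q}`
on a rank-`r` Euclidean vector bundle, as a function of `t = |a|^2`. -/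
noncomputable def fiberScal (r p q t : ℝ) : ℝ :=
  (r - 1) * (1 + t) ^ p / ((1 + q * t) ^ 2 * (1 + t) ^ 2) *
    (q ^ 2 * (r - 2) * t ^ 3
      + (q * ((2 - r) * p ^ 2 + 2 * (r - 3) * p + 2 * (r - 2) * q + r)) * t ^ 2
      + ((2 - r) * p ^ 2 + 2 * (r - 1) * p * q + (r - 2) * q ^ 2
          + 2 * (r - 2) * p + 2 * r * q) * t
      + r * (2 * p + q))

lemma hG_aux (p q K A B C D : ℝ)
    (key : ∀ t ≥ (0:ℝ), (1+t)^p * (A*t^3+B*t^2+C*t+D) = K * ((1+q*t)^2*(1+t)^2))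
    (t : ℝ) (ht : 0 < t) :
    (A*t^3+B*t^2+C*t+D) * (2*q*(1+q*t)*(1+t) + 2*(1+q*t)^2)
      - (1+q*t)^2 * (p*(A*t^3+B*t^2+C*t+D) + (1+t)*(3*A*t^2+2*B*t+C)) = 0 := by
  have ht1 : (0:ℝ) < 1 + t := by linarith
  set F : ℝ → ℝ := fun s => (1+s)^p * (A*s^3+B*s^2+C*s+D) - K * ((1+q*s)^2*(1+s)^2) with hFdef
  have hF0 : ∀ s ∈ Set.Ioi (0:ℝ), F s = 0 := by
    intro s hs
    have := key s (le_of_lt hs)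
    simp [hFdef, this]
  have hEq : F =ᶠ[nhds t] (fun _ => 0) := Filter.eventuallyEq_of_mem (Ioi_mem_nhds ht) hF0
  have hderiv0 : deriv F t = 0 := by rw [hEq.deriv_eq]; simp
  have h1 : HasDerivAt (fun s : ℝ => 1 + s) 1 t := (hasDerivAt_id t).const_add 1
  have hX : HasDerivAt (fun s : ℝ => (1+s)^p) (1 * p * (1+t)^(p-1)) t :=
    h1.rpow_const (Or.inl ht1.ne')
  have hP : HasDerivAt (fun s : ℝ => A*s^3+B*s^2+C*s+D) (3*A*t^2+2*B*t+C) t := by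
    have h := ((((hasDerivAt_pow 3 t).const_mul A).add ((hasDerivAt_pow 2 t).const_mul B)).add
      ((hasDerivAt_id t).const_mul C)).add_const D
    simp only [id_eq] at h
    refine h.congr_deriv ?_
    push_cast; ring
  have hQ : HasDerivAt (fun s : ℝ => (1+q*s)^2) (2*(1+q*t)*q) t := by
    have h := (((hasDerivAt_id t).const_mul q).const_add 1).pow 2
    simp only [id_eq] at h
    refine h.congr_deriv ?_
    push_cast; ring
  have h2 : HasDerivAt (fun s : ℝ => (1+s)^2) (2*(1+t)) t := by
    have h := h1.pow 2
    refine h.congr_deriv ?_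
    push_cast; ring
  have hF : HasDerivAt F
      ((1 * p * (1+t)^(p-1)) * (A*t^3+B*t^2+C*t+D) + (1+t)^p * (3*A*t^2+2*B*t+C)
        - K * ((2*(1+q*t)*q)*(1+t)^2 + (1+q*t)^2*(2*(1+t)))) t :=
    (hX.mul hP).sub ((hQ.mul h2).const_mul K)
  have hd : (1 * p * (1+t)^(p-1)) * (A*t^3+B*t^2+C*t+D) + (1+t)^p * (3*A*t^2+2*B*t+C)
      - K * ((2*(1+q*t)*q)*(1+t)^2 + (1+q*t)^2*(2*(1+t))) = 0 := by
    rw [← hF.deriv]; exact hderiv0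
  have hsplit : (1+t)^(p-1) * (1+t) = (1+t)^p := by
    nth_rewrite 2 [show (1+t) = (1+t)^(1:ℝ) from (Real.rpow_one _).symm]
    rw [← Real.rpow_add ht1]; ring_nf
  have hkey := key t ht.le
  have hXpos : (0:ℝ) < (1+t)^p := Real.rpow_pos_of_pos ht1 p
  apply mul_left_cancel₀ hXpos.ne'
  rw [mul_zero]
  linear_combination (2*q*(1+q*t)*(1+t) + 2*(1+q*t)^2) * hkey
    - ((1+t)*(1+q*t)^2) * hd
    + (p*(A*t^3+B*t^2+C*t+D)*(1+q*t)^2) * hsplit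

theorem stmt_0 (r : ℕ) (hr : 2 ≤ r) (p q : ℝ) (hq : 0 ≤ q) :
    (∀ t ≥ (0 : ℝ), fiberScal (r : ℝ) p q t = fiberScal (r : ℝ) p q 0) ↔
      ((p = 0 ∧ q = 0) ∨ (p = 2 ∧ q = 0)) := by
  have hrR : (2:ℝ) ≤ (r:ℝ) := by exact_mod_cast hr
  constructor
  · intro h
    have key : ∀ t ≥ (0:ℝ), (1+t)^p *
        ((q^2*((r:ℝ)-2))*t^3
          + (q*((2-(r:ℝ))*p^2+2*((r:ℝ)-3)*p+2*((r:ℝ)-2)*q+(r:ℝ)))*t^2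
          + ((2-(r:ℝ))*p^2+2*((r:ℝ)-1)*p*q+((r:ℝ)-2)*q^2+2*((r:ℝ)-2)*p+2*(r:ℝ)*q)*t
          + ((r:ℝ)*(2*p+q)))
        = ((r:ℝ)*(2*p+q)) * ((1+q*t)^2*(1+t)^2) := by
      intro t ht
      have h' := h t ht
      have ht1 : (0:ℝ) < 1 + t := by linarith
      have htq : (0:ℝ) < 1 + q * t := by nlinarith
      have hrne : (r:ℝ) - 1 ≠ 0 := by intro hc; nlinarith [hc]
      simp only [fiberScal] at h'
      norm_num [Real.one_rpow] at h'
      field_simp at h'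
      apply mul_left_cancel₀ hrne
      linear_combination ((r:ℝ)-1) * h'
    have hGt := fun t ht => hG_aux p q ((r:ℝ)*(2*p+q)) (q^2*((r:ℝ)-2))
      (q*((2-(r:ℝ))*p^2+2*((r:ℝ)-3)*p+2*((r:ℝ)-2)*q+(r:ℝ)))
      ((2-(r:ℝ))*p^2+2*((r:ℝ)-1)*p*q+((r:ℝ)-2)*q^2+2*((r:ℝ)-2)*p+2*(r:ℝ)*q)
      ((r:ℝ)*(2*p+q)) key t ht
    have g1 := hGt 1 one_pos
    have g2 := hGt 2 (by norm_num)
    have g3 := hGt 3 (by norm_num)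
    have g4 := hGt 4 (by norm_num)
    have g5 := hGt 5 (by norm_num)
    have g6 := hGt 6 (by norm_num)
    have e0 : ((r:ℝ)+2)*(q^2+2*p+p*q-p^2) = 0 := by
      linear_combination 6*g1 - 15*g2 + 20*g3 - 15*g4 + 6*g5 - g6
    have e4 : q^3*(((r:ℝ)-2)*(2+3*q+p-2*p*q-4*p^2+p^3) + 2*(p-1)*(p-2)) = 0 := by
      linear_combination (1/6)*g1 - (19/24)*g2 + (3/2)*g3 - (17/12)*g4 + (2/3)*g5 - (1/8)*g6
    have e5 : q^4*((((r:ℝ)-2))*(1-p)) = 0 := by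
      linear_combination (-1/120)*g1 + (1/24)*g2 - (1/12)*g3 + (1/12)*g4 - (1/24)*g5 + (1/120)*g6
    clear key hGt g1 g2 g3 g4 g5 g6 h
    have hq0 : q = 0 := by
      by_contra hqne
      have hqpos : 0 < q := hq.lt_of_ne (Ne.symm hqne)
      have h52 : ((r:ℝ)-2)*(1-p) = 0 := by
        rcases mul_eq_zero.mp e5 with h' | h'
        · exact absurd h' (by positivity)
        · exact h'
      rcases mul_eq_zero.mp h52 with hr2 | hp1
      · have e4' : (p-1)*(p-2) = 0 := by
          have hq3 : (2*q^3) ≠ 0 := by positivity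
          apply mul_left_cancel₀ hq3
          rw [mul_zero]
          linear_combination e4 - q^3*(2+3*q+p-2*p*q-4*p^2+p^3)*hr2
        rcases mul_eq_zero.mp e4' with hp1 | hp2
        · have hcon : ((r:ℝ)+2)*(q^2+q+1) = 0 := by
            linear_combination e0 - ((r:ℝ)+2)*(q-p+1)*hp1
          nlinarith [hcon, sq_nonneg q]
        · have hcon : ((r:ℝ)+2)*(q*(q+2)) = 0 := by
            linear_combination e0 + ((r:ℝ)+2)*(p-q)*hp2
          nlinarith [hcon]
      · have hcon : ((r:ℝ)+2)*(q^2+q+1) = 0 := by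
          linear_combination e0 + ((r:ℝ)+2)*(q-p+1)*hp1
        nlinarith [hcon, sq_nonneg q]
    subst hq0
    have hr2pos : ((r:ℝ)+2) ≠ 0 := by positivity
    have e0' : p*(2-p) = 0 := by
      apply mul_left_cancel₀ hr2pos
      rw [mul_zero]
      linear_combination e0
    rcases mul_eq_zero.mp e0' with hp | hp
    · exact Or.inl ⟨hp, rfl⟩
    · exact Or.inr ⟨by linarith, rfl⟩
  · rintro (⟨hp, hq0⟩ | ⟨hp, hq0⟩) <;> subst hp <;> subst hq0 <;> intro t ht
    · norm_num [fiberScal]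
    · have ht1 : (0:ℝ) < 1 + t := by linarith
      have hpow : ((1:ℝ)+t)^(2:ℝ) = (1+t)^(2:ℕ) := by
        rw [show (2:ℝ) = ((2:ℕ):ℝ) by norm_num, Real.rpow_natCast]
      simp only [fiberScal]
      rw [hpow]
      norm_num [Real.one_rpow]
      rw [div_mul_eq_mul_div, div_eq_iff (by positivity)]
      ring
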